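/- arXiv:2210.13816 — 3 statements merged into one kernel-verified Lean document; each statement's English description precedes it below -/
import Mathlib

section
/- Let (E, μ) be a measure space and let f and f̃ be probability density functions with respect to μ. Suppose G ⊆ E is measurable with ∫_{G^c} f dμ ≤ δ for some δ ≥ 0, and f(x)/f̃(x) ≤ exp(ε) for all x ∈ G. Then for every measurable set S ⊆ E, ∫_S f dμ ≤ exp(ε) ∫_S f̃ dμ + δ. -/
open MeasureTheory
open scoped ENNReal

/-- Abstract (ε,δ)-differential privacy lemma: if `f/f̃ ≤ exp ε` on `G` and the mass of `f`
outside `G` is at most `δ`, then `∫_S f ≤ exp ε · ∫_S f̃ + δ` for every measurable `S`. -/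
theorem stmt2 {E : Type*} [MeasurableSpace E] (μ : Measure E)
    (f ftilde : E → ℝ≥0∞) (hf : Measurable f) (hftilde : Measurable ftilde)
    (hf1 : ∫⁻ x, f x ∂μ = 1) (hftilde1 : ∫⁻ x, ftilde x ∂μ = 1)
    (G : Set E) (hG : MeasurableSet G)
    (ε δ : ℝ) (hε : 0 ≤ ε) (hδ : 0 ≤ δ)
    (htail : ∫⁻ x in Gᶜ, f x ∂μ ≤ ENNReal.ofReal δ)
    (hratio : ∀ x ∈ G, f x ≤ ENNReal.ofReal (Real.exp ε) * ftilde x)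
    (S : Set E) (hS : MeasurableSet S) :
    ∫⁻ x in S, f x ∂μ ≤ ENNReal.ofReal (Real.exp ε) * ∫⁻ x in S, ftilde x ∂μ +
      ENNReal.ofReal δ := by
  have hsplit : ∫⁻ x in S, f x ∂μ =
      (∫⁻ x in S ∩ G, f x ∂μ) + ∫⁻ x in S ∩ Gᶜ, f x ∂μ := by
    rw [← lintegral_add_compl (f := f) (μ := μ.restrict S) hG,
      Measure.restrict_restrict hG, Measure.restrict_restrict hG.compl,
      Set.inter_comm G S, Set.inter_comm Gᶜ S]
  rw [hsplit]
  have h1 : ∫⁻ x in S ∩ G, f x ∂μ ≤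
      ENNReal.ofReal (Real.exp ε) * ∫⁻ x in S, ftilde x ∂μ := by
    calc ∫⁻ x in S ∩ G, f x ∂μ
        ≤ ∫⁻ x in S ∩ G, ENNReal.ofReal (Real.exp ε) * ftilde x ∂μ := by
          refine setLIntegral_mono (hftilde.const_mul _) ?_
          exact fun x hx => hratio x hx.2
      _ = ENNReal.ofReal (Real.exp ε) * ∫⁻ x in S ∩ G, ftilde x ∂μ := by
          rw [lintegral_const_mul _ hftilde]
      _ ≤ ENNReal.ofReal (Real.exp ε) * ∫⁻ x in S, ftilde x ∂μ := by
          gcongr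
          exact Set.inter_subset_left
  have h2 : ∫⁻ x in S ∩ Gᶜ, f x ∂μ ≤ ENNReal.ofReal δ :=
    le_trans (lintegral_mono_set Set.inter_subset_right) htail
  exact add_le_add h1 h2
end

section
/- Let λ, λ̃ : [0,∞) → (0,∞) be intensity functions with λ(t) ≥ ρ and λ̃(t) ≥ ρ and |λ(t) - λ̃(t)| ≤ K for all t ≥ 0, where ρ > 0 and K > 1. Let τ and τ̃ be the first arrival times of inhomogeneous Poisson processes with rates λ and λ̃ respectively. Then for any ε > log(1 + K/ρ), setting δ = exp(-(ρ/K)·[ε - log(1 + K/ρ)]), it holds that for every measurable S ⊆ [0,∞): P(τ ∈ S) ≤ exp(ε)·P(τ̃ ∈ S) + δ. -/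
open Real MeasureTheory Set Filter Metric
open scoped Topology
open scoped ENNReal

lemma locInt.intervalIntegrable {f : ℝ → ℝ} (hf : LocallyIntegrable f volume) (a b : ℝ) :
    IntervalIntegrable f volume a b := by
  rw [intervalIntegrable_iff]
  exact (hf.integrableOn_isCompact isCompact_uIcc).mono_set Ioc_subset_Icc_self

lemma ae_hasDerivAt_primitive {f : ℝ → ℝ} (hf : LocallyIntegrable f volume) :
    ∀ᵐ x, HasDerivAt (fun t => ∫ s in (0:ℝ)..t, f s) (f x) x := by
  filter_upwards [IsUnifLocDoublingMeasure.ae_tendsto_average_norm_sub volume hf 1] with x hx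
  have hball : Tendsto (fun y : ℝ => ⨍ z in closedBall x |y - x|, ‖f z - f x‖) (𝓝[≠] x) (𝓝 0) := by
    refine hx (fun _ => x) (fun y => |y - x|) ?_ ?_
    · have h1 : Tendsto (fun y : ℝ => |y - x|) (𝓝[≠] x) (𝓝 0) := by
        have : Tendsto (fun y : ℝ => |y - x|) (𝓝 x) (𝓝 |x - x|) :=
          ((continuous_id.sub continuous_const).abs).continuousAt
        simpa using this.mono_left nhdsWithin_le_nhds
      refine tendsto_nhdsWithin_of_tendsto_nhds_of_eventually_within _ h1 ?_
      filter_upwards [self_mem_nhdsWithin] with y hy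
      exact abs_pos.2 (sub_ne_zero.2 hy)
    · filter_upwards with y
      simpa using mem_closedBall_self (by positivity)
  rw [hasDerivAt_iff_tendsto, ← nhdsNE_sup_pure x, tendsto_sup]
  constructor
  · apply squeeze_zero' (g := fun y => 2 * ⨍ z in closedBall x |y - x|, ‖f z - f x‖)
    · filter_upwards with y; positivity
    · filter_upwards [self_mem_nhdsWithin] with y hy
      have hxy : (0:ℝ) < |y - x| := abs_pos.2 (sub_ne_zero.2 hy)
      have hsub : Set.uIoc x y ⊆ closedBall x |y - x| := by
        intro z hz
        rw [Real.closedBall_eq_Icc]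
        rcases le_or_gt x y with h | h
        · rw [uIoc_of_le h] at hz
          constructor <;> [skip; skip] <;>
            · rcases abs_cases (y - x) with ⟨he, _⟩ | ⟨he, _⟩ <;> cases hz <;> linarith
        · rw [uIoc_of_ge h.le] at hz
          constructor <;> [skip; skip] <;>
            · rcases abs_cases (y - x) with ⟨he, _⟩ | ⟨he, _⟩ <;> cases hz <;> linarith
      have hint : IntegrableOn (fun z => ‖f z - f x‖) (closedBall x |y - x|) volume :=
        (((hf.integrableOn_isCompact (isCompact_closedBall _ _)).sub
          (integrableOn_const measure_closedBall_lt_top.ne)).norm)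
      have key : (fun t => ∫ s in (0:ℝ)..t, f s) y - (fun t => ∫ s in (0:ℝ)..t, f s) x
          - (y - x) • f x = ∫ s in x..y, (f s - f x) := by
        simp only
        rw [intervalIntegral.integral_sub (locInt.intervalIntegrable hf x y)
          intervalIntegrable_const, intervalIntegral.integral_const,
          intervalIntegral.integral_interval_sub_left (locInt.intervalIntegrable hf 0 y)
            (locInt.intervalIntegrable hf 0 x)]
      rw [key]
      have h1 : ‖∫ s in x..y, (f s - f x)‖ ≤ ∫ z in closedBall x |y - x|, ‖f z - f x‖ := by
        refine (intervalIntegral.norm_integral_le_integral_norm_uIoc).trans ?_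
        exact setIntegral_mono_set hint (Eventually.of_forall fun z => norm_nonneg _)
          (HasSubset.Subset.eventuallyLE hsub)
      have h2 : ∫ z in closedBall x |y - x|, ‖f z - f x‖
          = (2 * |y - x|) * ⨍ z in closedBall x |y - x|, ‖f z - f x‖ := by
        rw [setAverage_eq, smul_eq_mul, Real.volume_real_closedBall (by positivity),
          ← mul_assoc, mul_inv_cancel₀ (by positivity), one_mul]
      calc ‖y - x‖⁻¹ * ‖∫ s in x..y, (f s - f x)‖
          ≤ ‖y - x‖⁻¹ * ((2 * |y - x|) * ⨍ z in closedBall x |y - x|, ‖f z - f x‖) := by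
            rw [← h2]; exact mul_le_mul_of_nonneg_left h1 (by positivity)
        _ = 2 * ⨍ z in closedBall x |y - x|, ‖f z - f x‖ := by
            rw [Real.norm_eq_abs]; field_simp
    · simpa using hball.const_mul 2
  · have h0 := tendsto_pure_nhds (fun x' => ‖x' - x‖⁻¹ * ‖(fun t => ∫ s in (0:ℝ)..t, f s) x'
        - (fun t => ∫ s in (0:ℝ)..t, f s) x - (x' - x) • f x‖) x
    simpa using h0
lemma tail_lintegral_le {f : ℝ → ℝ} (hloc : LocallyIntegrable f volume)
    (hpos : ∀ x, 0 ≤ f x) (T : ℝ) :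
    ∫⁻ t in Set.Ioi T, ENNReal.ofReal (f t * Real.exp (-∫ s in (0:ℝ)..t, f s)) ≤
      ENNReal.ofReal (Real.exp (-∫ s in (0:ℝ)..T, f s)) := by
  set F : ℝ → ℝ := fun t => ∫ s in (0:ℝ)..t, f s with hFdef
  have hFc : Continuous F :=
    intervalIntegral.continuous_primitive (fun a b => locInt.intervalIntegrable hloc a b) 0
  have hFmono : Monotone F := by
    intro a b hab
    have h1 : F b - F a = ∫ s in a..b, f s :=
      intervalIntegral.integral_interval_sub_left (locInt.intervalIntegrable hloc 0 b)
        (locInt.intervalIntegrable hloc 0 a)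
    have h2 : (0:ℝ) ≤ ∫ s in a..b, f s :=
      intervalIntegral.integral_nonneg hab fun u _ => hpos u
    linarith
  set G : ℝ → ℝ := fun t => -Real.exp (-F t) with hGdef
  have hGmono : Monotone G := fun a b hab =>
    neg_le_neg (Real.exp_le_exp.2 (neg_le_neg (hFmono hab)))
  have hGcont : Continuous G := (Real.continuous_exp.comp hFc.neg).neg
  let St : StieltjesFunction ℝ := ⟨G, hGmono, fun x => hGcont.continuousWithinAt⟩
  have hae2 : ∀ᵐ x, HasDerivAt G (f x * Real.exp (-F x)) x := by
    filter_upwards [ae_hasDerivAt_primitive hloc] with x hx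
    have h1 : HasDerivAt (fun t => Real.exp (-F t)) (Real.exp (-F x) * (-f x)) x :=
      (hx.neg).exp
    have h2 := h1.neg
    rw [show f x * Real.exp (-F x) = -(Real.exp (-F x) * -f x) by ring]
    exact h2
  have key : ∀ᵐ x, ENNReal.ofReal (f x * Real.exp (-F x)) ≤ St.measure.rnDeriv volume x := by
    filter_upwards [St.ae_hasDerivAt, hae2] with x h1 h2
    have h3 : f x * Real.exp (-F x) = (St.measure.rnDeriv volume x).toReal := h2.unique h1
    rw [h3]
    exact ENNReal.ofReal_toReal_le
  have step1 : ∫⁻ t in Set.Ioi T, ENNReal.ofReal (f t * Real.exp (-F t)) ≤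
      ∫⁻ t in Set.Ioi T, St.measure.rnDeriv volume t :=
    lintegral_mono_ae (ae_restrict_of_ae key)
  have step2 : ∫⁻ t in Set.Ioi T, St.measure.rnDeriv volume t ≤ St.measure (Set.Ioi T) := by
    rw [← withDensity_apply _ measurableSet_Ioi]
    exact MeasureTheory.Measure.withDensity_rnDeriv_le St.measure volume _
  have step3 : St.measure (Set.Ioi T) ≤ ENNReal.ofReal (Real.exp (-F T)) := by
    have hU : Set.Ioi T = ⋃ n : ℕ, Set.Ioc T (T + (n + 1)) := by
      ext x
      simp only [Set.mem_Ioi, Set.mem_iUnion, Set.mem_Ioc]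
      constructor
      · intro hx
        refine ⟨⌈x - T⌉₊, hx, ?_⟩
        have := Nat.le_ceil (x - T)
        push_cast
        linarith [Nat.le_ceil (x - T)]
      · rintro ⟨n, h1, _⟩; exact h1
    have hdir : Directed (fun x1 x2 => x1 ⊆ x2) (fun n : ℕ => Set.Ioc T (T + (n + 1))) := by
      apply Monotone.directed_le
      intro m n hmn
      apply Set.Ioc_subset_Ioc le_rfl
      have : (m:ℝ) ≤ n := Nat.cast_le.2 hmn
      linarith
    rw [hU, hdir.measure_iUnion]
    refine iSup_le fun n => ?_
    rw [StieltjesFunction.measure_Ioc]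
    have hGle : St (T + (n + 1)) ≤ 0 := neg_nonpos.2 (Real.exp_pos _).le
    have : St (T + (n + 1)) - St T ≤ Real.exp (-F T) := by
      have : St T = -Real.exp (-F T) := rfl
      rw [this]; linarith
    exact ENNReal.ofReal_le_ofReal this
  exact step1.trans (step2.trans step3)
/-- (ε,δ)-differential privacy of communicated switching times (Theorem 5.1):
the laws of the first arrival times τ, τ̃, with densities `λ(t)·exp(-∫₀ᵗ λ)` and
`λ̃(t)·exp(-∫₀ᵗ λ̃)`, satisfy `P(τ ∈ S) ≤ exp(ε)·P(τ̃ ∈ S) + δ` for every measurable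
`S ⊆ [0,∞)`. -/
theorem stmt3 (lam lam' : ℝ → ℝ) (ρ K : ℝ) (hρ : 0 < ρ) (hK : 1 < K)
    (hlb : ∀ t, 0 ≤ t → ρ ≤ lam t) (hlb' : ∀ t, 0 ≤ t → ρ ≤ lam' t)
    (hdiff : ∀ t, 0 ≤ t → |lam t - lam' t| ≤ K)
    (hint : ∀ t, 0 ≤ t → IntervalIntegrable lam volume 0 t)
    (hint' : ∀ t, 0 ≤ t → IntervalIntegrable lam' volume 0 t)
    (ε : ℝ) (hε : Real.log (1 + K / ρ) < ε)
    (δ : ℝ) (hδ : δ = Real.exp (-(ρ / K) * (ε - Real.log (1 + K / ρ))))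
    (S : Set ℝ) (hS : MeasurableSet S) (hS0 : S ⊆ Set.Ici (0:ℝ)) :
    ∫⁻ t in S, ENNReal.ofReal (lam t * Real.exp (-∫ s in (0:ℝ)..t, lam s)) ∂volume ≤
      ENNReal.ofReal (Real.exp ε) *
        ∫⁻ t in S, ENNReal.ofReal (lam' t * Real.exp (-∫ s in (0:ℝ)..t, lam' s)) ∂volume +
      ENNReal.ofReal δ := by
  have hK0 : (0:ℝ) < K := lt_trans one_pos hK
  have hlog : (0:ℝ) < 1 + K / ρ := by positivity
  set T : ℝ := (ε - Real.log (1 + K / ρ)) / K with hT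
  have hT0 : 0 < T := div_pos (by linarith) hK0
  have hKT : K * T = ε - Real.log (1 + K / ρ) := by rw [hT, mul_div_assoc']; exact mul_div_cancel_left₀ _ hK0.ne'
  have hδ' : δ = Real.exp (-(ρ * T)) := by
    rw [hδ]; congr 1; rw [hT]; field_simp
  have hSdecomp : S = (S ∩ Set.Icc 0 T) ∪ (S ∩ Set.Ioi T) := by
    ext x; constructor
    · intro hx
      have hx0 := hS0 hx
      rcases le_or_gt x T with h | h
      · exact Or.inl ⟨hx, hx0, h⟩
      · exact Or.inr ⟨hx, h⟩
    · rintro (⟨h, _⟩ | ⟨h, _⟩) <;> exact h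
  set f : ℝ → ℝ≥0∞ := fun t => ENNReal.ofReal (lam t * Real.exp (-∫ s in (0:ℝ)..t, lam s))
    with hfdef
  set g : ℝ → ℝ≥0∞ := fun t => ENNReal.ofReal (lam' t * Real.exp (-∫ s in (0:ℝ)..t, lam' s))
    with hgdef
  have hsplit : ∫⁻ t in S, f t ≤ (∫⁻ t in S ∩ Set.Icc 0 T, f t) + ∫⁻ t in S ∩ Set.Ioi T, f t := by
    conv_lhs => rw [hSdecomp]
    exact lintegral_union_le _ _ _
  -- pointwise bound on [0, T]
  have hpt : ∀ t ∈ S ∩ Set.Icc 0 T, f t ≤ ENNReal.ofReal (Real.exp ε) * g t := by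
    rintro t ⟨htS, ht0, htT⟩
    have hl' := hlb' t ht0
    have hexp : Real.exp (-∫ s in (0:ℝ)..t, lam s) ≤
        Real.exp (K * T) * Real.exp (-∫ s in (0:ℝ)..t, lam' s) := by
      rw [← Real.exp_add]
      apply Real.exp_le_exp.2
      have hsub : (∫ s in (0:ℝ)..t, lam' s) - (∫ s in (0:ℝ)..t, lam s)
          = ∫ s in (0:ℝ)..t, (lam' s - lam s) :=
        (intervalIntegral.integral_sub (hint' t ht0) (hint t ht0)).symm
      have hmono : (∫ s in (0:ℝ)..t, (lam' s - lam s)) ≤ ∫ s in (0:ℝ)..t, (K:ℝ) := by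
        apply intervalIntegral.integral_mono_on ht0 ((hint' t ht0).sub (hint t ht0))
          intervalIntegrable_const
        intro s hs
        have h1 := (abs_le.1 (hdiff s hs.1)).1
        linarith
      have hconst : (∫ s in (0:ℝ)..t, (K:ℝ)) = t * K := by simp
      have hKt : t * K ≤ K * T := by nlinarith
      linarith
    have hlam : lam t ≤ (1 + K / ρ) * lam' t := by
      have h1 := (abs_le.1 (hdiff t ht0)).2
      have h2 : K ≤ (K / ρ) * lam' t := by
        rw [div_mul_eq_mul_div, le_div_iff₀ hρ]
        nlinarith
      nlinarith
    have hmul : lam t * Real.exp (-∫ s in (0:ℝ)..t, lam s) ≤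
        Real.exp ε * (lam' t * Real.exp (-∫ s in (0:ℝ)..t, lam' s)) := by
      have hee : Real.exp ε = (1 + K / ρ) * Real.exp (K * T) := by
        rw [← Real.exp_log hlog, ← Real.exp_add]
        congr 1
        rw [hKT]; ring
      have step : lam t * Real.exp (-∫ s in (0:ℝ)..t, lam s) ≤
          ((1 + K / ρ) * lam' t) * (Real.exp (K * T) * Real.exp (-∫ s in (0:ℝ)..t, lam' s)) := by
        apply mul_le_mul hlam hexp (Real.exp_pos _).le
        exact mul_nonneg (by positivity) (lt_of_lt_of_le hρ hl').le
      calc lam t * Real.exp (-∫ s in (0:ℝ)..t, lam s)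
          ≤ ((1 + K / ρ) * lam' t) * (Real.exp (K * T) * Real.exp (-∫ s in (0:ℝ)..t, lam' s)) :=
            step
        _ = Real.exp ε * (lam' t * Real.exp (-∫ s in (0:ℝ)..t, lam' s)) := by rw [hee]; ring
    refine le_trans (ENNReal.ofReal_le_ofReal hmul) ?_
    rw [ENNReal.ofReal_mul (Real.exp_pos ε).le]
  have hpart1 : ∫⁻ t in S ∩ Set.Icc 0 T, f t ≤ ENNReal.ofReal (Real.exp ε) * ∫⁻ t in S, g t := by
    have hmeas : MeasurableSet (S ∩ Set.Icc 0 T) := hS.inter measurableSet_Icc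
    calc ∫⁻ t in S ∩ Set.Icc 0 T, f t
        ≤ ∫⁻ t in S ∩ Set.Icc 0 T, ENNReal.ofReal (Real.exp ε) * g t :=
          lintegral_mono_ae ((ae_restrict_iff' hmeas).2 (Filter.Eventually.of_forall hpt))
      _ = ENNReal.ofReal (Real.exp ε) * ∫⁻ t in S ∩ Set.Icc 0 T, g t :=
          lintegral_const_mul' _ _ ENNReal.ofReal_ne_top
      _ ≤ ENNReal.ofReal (Real.exp ε) * ∫⁻ t in S, g t := by
          exact mul_le_mul_right (lintegral_mono'
            (MeasureTheory.Measure.restrict_mono Set.inter_subset_left le_rfl) le_rfl) _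
  -- the extended intensity
  set lamE : ℝ → ℝ := fun x => if 0 ≤ x then lam x else ρ with hlamE
  have hposE : ∀ x, 0 ≤ lamE x := by
    intro x
    by_cases h : 0 ≤ x
    · simp only [hlamE, if_pos h]; exact le_trans hρ.le (hlb x h)
    · simp only [hlamE, if_neg h]; exact hρ.le
  have hlocE : LocallyIntegrable lamE volume := by
    rw [locallyIntegrable_iff]
    intro k hk
    obtain ⟨r, hr⟩ := hk.isBounded.subset_closedBall 0
    have hr0 : (0:ℝ) ≤ max r 0 := le_max_right _ _
    have hrk : k ⊆ Set.Icc (-(max r 0)) (max r 0) := by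
      intro x hx
      have h1 := hr hx
      rw [Real.closedBall_eq_Icc] at h1
      constructor
      · have := h1.1; have : 0 - r ≤ x := h1.1; simp at this ⊢
        rcases le_max_iff.mpr (Or.inl le_rfl : r ≤ r ∨ r ≤ 0) with _
        calc -(max r 0) ≤ -r := neg_le_neg (le_max_left _ _)
          _ = 0 - r := by ring
          _ ≤ x := h1.1
      · calc x ≤ 0 + r := h1.2
          _ = r := by ring
          _ ≤ max r 0 := le_max_left _ _
    have h1 : IntegrableOn lamE (Set.Ico (-(max r 0)) 0) volume := by
      refine IntegrableOn.congr_fun (f := fun _ : ℝ => ρ)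
        (integrableOn_const measure_Ico_lt_top.ne) ?_ measurableSet_Ico
      intro x hx
      simp only [hlamE, if_neg (not_le.2 hx.2)]
    have h2 : IntegrableOn lamE (Set.Icc 0 (max r 0)) volume := by
      have h3 := hint (max r 0) hr0
      rw [intervalIntegrable_iff, Set.uIoc_of_le hr0] at h3
      have hlam : IntegrableOn lam (Set.Icc 0 (max r 0)) volume :=
        (integrableOn_Icc_iff_integrableOn_Ioc).2 h3
      refine hlam.congr_fun ?_ measurableSet_Icc
      intro x hx
      simp only [hlamE, if_pos hx.1]
    refine (h1.union h2).mono_set ?_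
    intro x hx
    have h4 := hrk hx
    rcases lt_or_ge x 0 with h | h
    · exact Or.inl ⟨h4.1, h⟩
    · exact Or.inr ⟨h, h4.2⟩
  have hpart2 : ∫⁻ t in S ∩ Set.Ioi T, f t ≤ ENNReal.ofReal δ := by
    have h1 : ∫⁻ t in S ∩ Set.Ioi T, f t ≤ ∫⁻ t in Set.Ioi T, f t :=
      lintegral_mono' (MeasureTheory.Measure.restrict_mono Set.inter_subset_right le_rfl) le_rfl
    have h2 : (∫⁻ t in Set.Ioi T, f t)
        = ∫⁻ t in Set.Ioi T, ENNReal.ofReal (lamE t * Real.exp (-∫ s in (0:ℝ)..t, lamE s)) := by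
      apply lintegral_congr_ae
      refine (ae_restrict_iff' measurableSet_Ioi).2 (Filter.Eventually.of_forall ?_)
      intro t ht
      have ht0 : (0:ℝ) ≤ t := le_of_lt (lt_trans hT0 ht)
      have hint_eq : (∫ s in (0:ℝ)..t, lamE s) = ∫ s in (0:ℝ)..t, lam s := by
        apply intervalIntegral.integral_congr
        intro s hs
        rw [Set.uIcc_of_le ht0] at hs
        simp only [hlamE, if_pos hs.1]
      rw [hfdef]
      simp only [hint_eq]
      simp only [hlamE, if_pos ht0]
    have h3 := tail_lintegral_le hlocE hposE T
    have h4 : ENNReal.ofReal (Real.exp (-∫ s in (0:ℝ)..T, lamE s)) ≤ ENNReal.ofReal δ := by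
      apply ENNReal.ofReal_le_ofReal
      rw [hδ']
      apply Real.exp_le_exp.2
      have h5 : (∫ s in (0:ℝ)..T, (ρ:ℝ)) ≤ ∫ s in (0:ℝ)..T, lamE s := by
        apply intervalIntegral.integral_mono_on hT0.le intervalIntegrable_const
          (locInt.intervalIntegrable hlocE 0 T)
        intro s hs
        simp only [hlamE, if_pos hs.1]
        exact hlb s hs.1
      have h6 : (∫ s in (0:ℝ)..T, (ρ:ℝ)) = T * ρ := by simp
      have : ρ * T ≤ ∫ s in (0:ℝ)..T, lamE s := by rw [mul_comm]; linarith
      linarith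
    calc ∫⁻ t in S ∩ Set.Ioi T, f t ≤ ∫⁻ t in Set.Ioi T, f t := h1
      _ = ∫⁻ t in Set.Ioi T, ENNReal.ofReal (lamE t * Real.exp (-∫ s in (0:ℝ)..t, lamE s)) := h2
      _ ≤ ENNReal.ofReal (Real.exp (-∫ s in (0:ℝ)..T, lamE s)) := h3
      _ ≤ ENNReal.ofReal δ := h4
  calc ∫⁻ t in S, f t ≤ (∫⁻ t in S ∩ Set.Icc 0 T, f t) + ∫⁻ t in S ∩ Set.Ioi T, f t := hsplit
    _ ≤ ENNReal.ofReal (Real.exp ε) * (∫⁻ t in S, g t) + ENNReal.ofReal δ :=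
        add_le_add hpart1 hpart2
end

section
/- Suppose λ, λ̃ : [0,∞) → (0,∞) satisfy λ(t) ≤ α + βt for all t ≥ 0 (with α, β ≥ 0) and (1/γ) ≤ λ̃(t)/λ(t) ≤ γ for all t ≥ 0 with γ > 1. Then for all t ≥ 0, exp(-∫_0^t λ(s) ds)·λ(t) / (exp(-∫_0^t λ̃(s) ds)·λ̃(t)) ≤ γ·exp((γ-1)·(αt + βt²/2)). -/
open Real MeasureTheory

/-- Ratio bound for first-arrival densities when `λ(t) ≤ α + βt` and the pointwise ratio
`λ̃/λ` lies in `[1/γ, γ]`. -/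
theorem stmt5 (lam lam' : ℝ → ℝ) (α β γ : ℝ) (hα : 0 ≤ α) (hβ : 0 ≤ β) (hγ : 1 < γ)
    (hpos : ∀ t, 0 ≤ t → 0 < lam t) (hpos' : ∀ t, 0 ≤ t → 0 < lam' t)
    (hub : ∀ t, 0 ≤ t → lam t ≤ α + β * t)
    (hratio : ∀ t, 0 ≤ t → 1 / γ ≤ lam' t / lam t ∧ lam' t / lam t ≤ γ)
    (hint : ∀ t, 0 ≤ t → IntervalIntegrable lam volume 0 t)
    (hint' : ∀ t, 0 ≤ t → IntervalIntegrable lam' volume 0 t)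
    (t : ℝ) (ht : 0 ≤ t) :
    Real.exp (-∫ s in (0:ℝ)..t, lam s) * lam t /
      (Real.exp (-∫ s in (0:ℝ)..t, lam' s) * lam' t) ≤
      γ * Real.exp ((γ - 1) * (α * t + β * t ^ 2 / 2)) := by
  have hγ0 : 0 < γ := lt_trans one_pos hγ
  set A := ∫ s in (0:ℝ)..t, lam s with hA
  set B := ∫ s in (0:ℝ)..t, lam' s with hB
  have hlt := hpos t ht
  have hlt' := hpos' t ht
  -- factor 1 : lam t / lam' t ≤ γ
  have h1 : lam t / lam' t ≤ γ := by
    have hr := (hratio t ht).1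
    rw [div_le_iff₀ hlt']
    have h : (1 / γ) * lam t ≤ (lam' t / lam t) * lam t :=
      mul_le_mul_of_nonneg_right hr hlt.le
    rw [div_mul_cancel₀ _ (ne_of_gt hlt)] at h
    have h2 := mul_le_mul_of_nonneg_left h (le_of_lt hγ0)
    rwa [← mul_assoc, mul_one_div_cancel (ne_of_gt hγ0), one_mul] at h2
  -- pointwise bound for integral
  have hptw : ∀ s ∈ Set.Icc (0:ℝ) t, lam' s - lam s ≤ (γ - 1) * (α + β * s) := by
    intro s hs
    have hs0 : 0 ≤ s := hs.1
    have hls := hpos s hs0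
    have hr := (hratio s hs0).2
    have h : lam' s ≤ γ * lam s := by
      have := mul_le_mul_of_nonneg_right hr hls.le
      rwa [div_mul_cancel₀ _ (ne_of_gt hls)] at this
    have h2 : lam' s - lam s ≤ (γ - 1) * lam s := by linarith
    have h3 : (γ - 1) * lam s ≤ (γ - 1) * (α + β * s) :=
      mul_le_mul_of_nonneg_left (hub s hs0) (by linarith)
    linarith
  have hintub : IntervalIntegrable (fun s => (γ - 1) * (α + β * s)) volume 0 t :=
    ((continuous_const.mul (continuous_const.add (continuous_const.mul continuous_id))).intervalIntegrable _ _)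
  have h2 : B - A ≤ (γ - 1) * (α * t + β * t ^ 2 / 2) := by
    have hsub : B - A = ∫ s in (0:ℝ)..t, (lam' s - lam s) := by
      rw [hA, hB, intervalIntegral.integral_sub (hint' t ht) (hint t ht)]
    have hmono : (∫ s in (0:ℝ)..t, (lam' s - lam s)) ≤
        ∫ s in (0:ℝ)..t, (γ - 1) * (α + β * s) :=
      intervalIntegral.integral_mono_on ht ((hint' t ht).sub (hint t ht)) hintub hptw
    have hval : (∫ s in (0:ℝ)..t, (γ - 1) * (α + β * s)) =
        (γ - 1) * (α * t + β * t ^ 2 / 2) := by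
      rw [intervalIntegral.integral_const_mul,
        intervalIntegral.integral_add intervalIntegrable_const
          (Continuous.intervalIntegrable (by continuity : Continuous fun x : ℝ => β * x) _ _),
        intervalIntegral.integral_const_mul, integral_id,
        intervalIntegral.integral_const, smul_eq_mul]
      ring
    rw [hsub]
    calc _ ≤ _ := hmono
    _ = _ := hval
  have hpos2 : 0 < Real.exp (-B) * lam' t := mul_pos (Real.exp_pos _) hlt'
  have key : Real.exp (-A) * lam t / (Real.exp (-B) * lam' t)
      = Real.exp (B - A) * (lam t / lam' t) := by
    have he : Real.exp (-A) / Real.exp (-B) = Real.exp (B - A) := by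
      rw [← Real.exp_sub]; ring_nf
    rw [mul_div_mul_comm, he]
  rw [key]
  have := mul_le_mul (Real.exp_le_exp.mpr h2) h1
    (div_nonneg hlt.le hlt'.le) (Real.exp_pos _).le
  calc Real.exp (B - A) * (lam t / lam' t)
      ≤ Real.exp ((γ - 1) * (α * t + β * t ^ 2 / 2)) * γ := this
    _ = γ * Real.exp ((γ - 1) * (α * t + β * t ^ 2 / 2)) := mul_comm _ _
end
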